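/- Let G be a compact Lie group of adjoint type (i.e., the adjoint map Ad: G → Aut(g) is injective) and A an abelian subgroup. Then the saturation Sat(A) = {g ∈ G : Ad(g) acts by a scalar on each A-weight space g_α of the complexified Lie algebra} is an abelian subgroup of G containing A. -/

import Mathlib

/-- Saturation is abelian.  Let `G` be a compact Lie group of adjoint type, modelled by an
injective adjoint representation `Ad : G →* GL(𝔤)` on its (complexified, finite-dimensional)
Lie algebra `𝔤`, acting by Lie algebra automorphisms, and let `A` be an abelian subgroup.
Under the weight decomposition of `𝔤` for `A` (the weight vectors span `𝔤`), the saturation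
`Sat(A) = {g ∈ G : Ad(g) acts by a scalar on each A-weight space}` is an abelian subgroup
of `G` containing `A`. -/
theorem saturation_abelian
    (G : Type*) [Group G] [TopologicalSpace G] [IsTopologicalGroup G] [CompactSpace G]
    (𝔤 : Type*) [LieRing 𝔤] [LieAlgebra ℂ 𝔤] [FiniteDimensional ℂ 𝔤]
    (Ad : G →* (𝔤 ≃ₗ[ℂ] 𝔤))
    (hbr : ∀ (g : G) (x y : 𝔤), Ad g ⁅x, y⁆ = ⁅Ad g x, Ad g y⁆)
    (hinj : Function.Injective Ad)
    (A : Subgroup G) (hA : ∀ a ∈ A, ∀ b ∈ A, a * b = b * a)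
    (hdec : Submodule.span ℂ
        {v : 𝔤 | ∃ α : A → ℂ, ∀ a : A, Ad ↑a v = α a • v} = ⊤) :
    (∀ a ∈ A, a ∈ {g : G | ∀ α : A → ℂ, ∃ c : ℂ,
        ∀ v : 𝔤, (∀ a' : A, Ad ↑a' v = α a' • v) → Ad g v = c • v}) ∧
    (1 : G) ∈ {g : G | ∀ α : A → ℂ, ∃ c : ℂ,
        ∀ v : 𝔤, (∀ a' : A, Ad ↑a' v = α a' • v) → Ad g v = c • v} ∧
    (∀ x ∈ {g : G | ∀ α : A → ℂ, ∃ c : ℂ,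
        ∀ v : 𝔤, (∀ a' : A, Ad ↑a' v = α a' • v) → Ad g v = c • v},
     ∀ y ∈ {g : G | ∀ α : A → ℂ, ∃ c : ℂ,
        ∀ v : 𝔤, (∀ a' : A, Ad ↑a' v = α a' • v) → Ad g v = c • v},
       x * y ∈ {g : G | ∀ α : A → ℂ, ∃ c : ℂ,
        ∀ v : 𝔤, (∀ a' : A, Ad ↑a' v = α a' • v) → Ad g v = c • v} ∧
       x⁻¹ ∈ {g : G | ∀ α : A → ℂ, ∃ c : ℂ,
        ∀ v : 𝔤, (∀ a' : A, Ad ↑a' v = α a' • v) → Ad g v = c • v} ∧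
       x * y = y * x) := by
  refine ⟨?_, ?_, ?_⟩
  · intro a ha α
    exact ⟨α ⟨a, ha⟩, fun v hv => hv ⟨a, ha⟩⟩
  · intro α
    exact ⟨1, fun v hv => by simp⟩
  · intro x hx y hy
    refine ⟨?_, ?_, ?_⟩
    · intro α
      obtain ⟨cx, hcx⟩ := hx α
      obtain ⟨cy, hcy⟩ := hy α
      refine ⟨cx * cy, fun v hv => ?_⟩
      have : Ad (x * y) v = Ad x (Ad y v) := by
        rw [map_mul]; rfl
      rw [this, hcy v hv, map_smul, hcx v hv, smul_smul, mul_comm]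
    · intro α
      obtain ⟨cx, hcx⟩ := hx α
      refine ⟨cx⁻¹, fun v hv => ?_⟩
      have h1 : Ad x⁻¹ (Ad x v) = v := by
        have : (Ad x⁻¹ * Ad x) v = v := by rw [← map_mul, inv_mul_cancel, map_one]; rfl
        exact this
      rw [hcx v hv, map_smul] at h1
      rcases eq_or_ne cx 0 with h0 | h0
      · have hv0 : v = 0 := by simpa [h0] using h1.symm
        simp [hv0]
      · conv_rhs => rw [← h1]
        rw [smul_smul, inv_mul_cancel₀ h0, one_smul]
    · apply hinj
      apply LinearEquiv.toLinearMap_injective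
      apply LinearMap.ext_on hdec
      rintro v ⟨α, hα⟩
      obtain ⟨cx, hcx⟩ := hx α
      obtain ⟨cy, hcy⟩ := hy α
      have e1 : Ad (x * y) v = Ad x (Ad y v) := by rw [map_mul]; rfl
      have e2 : Ad (y * x) v = Ad y (Ad x v) := by rw [map_mul]; rfl
      show Ad (x * y) v = Ad (y * x) v
      rw [e1, e2, hcx v hα, hcy v hα, map_smul, map_smul, hcx v hα, hcy v hα,
        smul_smul, smul_smul, mul_comm]
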